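/- Let {A^(j)} and {B^(j)} be projective matrix systems over the same sequence of finite nonempty level sets (Br_j) with Br_0 = {v_0}. Set L_j = √(#Br_j) · max_{w ∈ Br_j} ((A^(1) A^(2) ⋯ A^(j))_{v_0,w})^{-1}. Suppose ε_k ∈ (0,1) for all k and there is N ∈ ℕ such that ε_k ≤ 2^{-k} (L_k ∏_{j=1}^{k-1} (‖A^(j)‖ + 1))^{-1} for all k ≥ N; suppose (B^(1) B^(2) ⋯ B^(j))_{v_0,w} ≥ (A^(1) A^(2) ⋯ A^(j))_{v_0,w} for all w ∈ Br_j and all j ≥ 1; and suppose ‖A^(j) − B^(j)‖ ≤ ε_j for all j ≥ N. Then the map T : lim_j A^(j) → lim_j B^(j) defined by (Tψ)^{j-1} = lim_{k→∞} B^(j) B^(j+1) ⋯ B^(j+k) ψ^{j+k} is an affine homeomorphism, i.e. a homeomorphism preserving convex combinations. -/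

import Mathlib

open scoped BigOperators
noncomputable section

open Classical in
/-- The matrix product `(A^(1) A^(2) ⋯ A^(k))_{v,w}`; here `A n` is the matrix
`A^(n+1)` of a projective matrix system, from level `n` to level `n+1`. -/
def pathMat {L : ℕ → Type} [∀ n, Fintype (L n)]
    (A : ∀ n, L n → L (n+1) → ℝ) : ∀ k, L 0 → L k → ℝ
  | 0, v, w => if v = w then 1 else 0
  | (k+1), v, w => ∑ u, pathMat A k v u * A k u w

/-- The inverse limit `lim_j A^(j)` of a projective matrix system. -/
def InvLimit {L : ℕ → Type} [∀ n, Fintype (L n)]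
    (A : ∀ n, L n → L (n+1) → ℝ) : Set (∀ n, L n → ℝ) :=
  {ψ | (∀ n v, 0 ≤ ψ n v) ∧ ∀ n v, ψ n v = ∑ w, A n v w * ψ (n+1) w}

/-- A projective matrix system: nonnegative entries and
`(A^(1) ⋯ A^(k))_{v₀,w} ≠ 0` for all `k` and `w`. -/
def IsProjSystem {L : ℕ → Type} [∀ n, Fintype (L n)] (v0 : L 0)
    (A : ∀ n, L n → L (n+1) → ℝ) : Prop :=
  (∀ n v w, 0 ≤ A n v w) ∧ ∀ k (w : L k), pathMat A k v0 w ≠ 0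

/-- The Euclidean (`ℓ²`) norm of a vector. -/
def euclEnorm {X : Type} [Fintype X] (ψ : X → ℝ) : ℝ := Real.sqrt (∑ x, ψ x ^ 2)

/-- Operator norm of a matrix with respect to the Euclidean norms. -/
def opNorm {X Y : Type} [Fintype X] [Fintype Y] (M : X → Y → ℝ) : ℝ :=
  ⨆ ψ : {ψ : Y → ℝ // euclEnorm ψ ≤ 1}, euclEnorm fun x => ∑ y, M x y * ψ.val y

/-- `applyChain B n k ψ = B^(n+1) B^(n+2) ⋯ B^(n+k) ψ` for `ψ ∈ ℝ^{Br_{n+k}}`. -/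
def applyChain {L : ℕ → Type} [∀ n, Fintype (L n)]
    (B : ∀ n, L n → L (n+1) → ℝ) (n : ℕ) : ∀ k, (L (n+k) → ℝ) → (L n → ℝ)
  | 0, ψ => ψ
  | k+1, ψ => applyChain B n k fun v => ∑ w, B (n+k) v w * ψ w

/-- The constant `L_j = √(#Br_j) · max_w ((A^(1)⋯A^(j))_{v₀,w})⁻¹` of Lemma 5.2. -/
def Lconst {L : ℕ → Type} [∀ n, Fintype (L n)] (v0 : L 0)
    (A : ∀ n, L n → L (n+1) → ℝ) (j : ℕ) : ℝ :=
  Real.sqrt (Fintype.card (L j) : ℝ) * ⨆ w : L j, (pathMat A j v0 w)⁻¹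


set_option linter.unusedSectionVars false
set_option maxHeartbeats 1000000

section
variable {L : ℕ → Type} [∀ n, Fintype (L n)] [∀ n, Nonempty (L n)]

lemma pathMat_nonneg {M : ∀ n, L n → L (n+1) → ℝ} (hM : ∀ n v w, 0 ≤ M n v w) :
    ∀ k (v : L 0) (w : L k), 0 ≤ pathMat M k v w
  | 0, v, w => by unfold pathMat; split <;> norm_num
  | (k+1), v, w => by
      unfold pathMat
      exact Finset.sum_nonneg fun u _ =>
        mul_nonneg (pathMat_nonneg hM k v u) (hM k u w)

lemma invLimit_path {M : ∀ n, L n → L (n+1) → ℝ} {ψ : ∀ n, L n → ℝ}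
    (hψ : ψ ∈ InvLimit M) (v0 : L 0) :
    ∀ k, ψ 0 v0 = ∑ w, pathMat M k v0 w * ψ k w := by
  classical
  intro k
  induction k with
  | zero =>
      have h1 : ∀ x : L 0, pathMat M 0 v0 x * ψ 0 x = if v0 = x then ψ 0 x else 0 := by
        intro x; by_cases h : v0 = x <;> simp [pathMat, h]
      rw [Finset.sum_congr rfl fun x _ => h1 x, Finset.sum_ite_eq]
      simp
  | succ k ih =>
      rw [ih]
      have : ∀ w : L (k+1), pathMat M (k+1) v0 w = ∑ u, pathMat M k v0 u * M k u w := by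
        intro w; rfl
    -- ∑_w (∑_u path u * M u w) * ψ w = ∑_u path u * ψ k u
      calc ∑ u, pathMat M k v0 u * ψ k u
          = ∑ u, pathMat M k v0 u * ∑ w, M k u w * ψ (k+1) w := by
            refine Finset.sum_congr rfl fun u _ => ?_
            rw [← hψ.2 k u]
        _ = ∑ u, ∑ w, pathMat M k v0 u * (M k u w * ψ (k+1) w) := by
            refine Finset.sum_congr rfl fun u _ => Finset.mul_sum _ _ _
        _ = ∑ w, ∑ u, pathMat M k v0 u * (M k u w * ψ (k+1) w) := Finset.sum_comm
        _ = ∑ w, pathMat M (k+1) v0 w * ψ (k+1) w := by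
            refine Finset.sum_congr rfl fun w _ => ?_
            rw [this w, Finset.sum_mul]
            congr 1; funext u; ring

lemma applyChain_step {M : ∀ n, L n → L (n+1) → ℝ} {ψ : ∀ n, L n → ℝ}
    (hψ : ψ ∈ InvLimit M) (n : ℕ) : ∀ k, applyChain M n k (ψ (n+k)) = ψ n := by
  intro k
  induction k with
  | zero => rfl
  | succ k ih =>
      show applyChain M n k (fun v => ∑ w, M (n+k) v w * ψ (n+k+1) w) = ψ n
      have : (fun v => ∑ w, M (n+k) v w * ψ (n+k+1) w) = ψ (n+k) := by
        funext v; exact (hψ.2 (n+k) v).symm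
      rw [this, ih]

lemma applyChain_nonneg {M : ∀ n, L n → L (n+1) → ℝ} (hM : ∀ n v w, 0 ≤ M n v w) (n : ℕ) :
    ∀ k (φ : L (n+k) → ℝ), (∀ w, 0 ≤ φ w) → ∀ v, 0 ≤ applyChain M n k φ v := by
  intro k
  induction k with
  | zero => intro φ hφ v; exact hφ v
  | succ k ih =>
      intro φ hφ v
      exact ih _ (fun u => Finset.sum_nonneg fun w _ => mul_nonneg (hM _ u w) (hφ w)) v

lemma applyChain_combo {M : ∀ n, L n → L (n+1) → ℝ} (n : ℕ) (a b : ℝ) :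
    ∀ k (φ χ : L (n+k) → ℝ),
      applyChain M n k (fun w => a * φ w + b * χ w)
        = fun v => a * applyChain M n k φ v + b * applyChain M n k χ v := by
  intro k
  induction k with
  | zero => intro φ χ; rfl
  | succ k ih =>
      intro φ χ
      show applyChain M n k (fun v => ∑ w, M (n+k) v w * (a * φ w + b * χ w)) = _
      have : (fun v => ∑ w, M (n+k) v w * (a * φ w + b * χ w))
          = fun v => a * (∑ w, M (n+k) v w * φ w) + b * (∑ w, M (n+k) v w * χ w) := by
        funext v
        rw [Finset.mul_sum, Finset.mul_sum, ← Finset.sum_add_distrib]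
        congr 1; funext w; ring
      rw [this, ih]
      rfl

/-- peel the leftmost matrix off a chain, for a family `φ`. -/
lemma applyChain_left {M : ∀ n, L n → L (n+1) → ℝ} :
    ∀ (k n : ℕ) (φ : ∀ m, L m → ℝ),
      applyChain M n (k+1) (φ (n+(k+1)))
        = fun v => ∑ w, M n v w * applyChain M (n+1) k (φ (n+1+k)) w := by
  intro k
  induction k with
  | zero => intro n φ; rfl
  | succ k ih =>
      intro n φ
      have step : applyChain M n (k+2) (φ (n+(k+2)))
          = applyChain M n (k+1) ((fun m v => ∑ w, M m v w * φ (m+1) w) (n+(k+1))) := rfl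
      rw [step, ih n (fun m v => ∑ w, M m v w * φ (m+1) w)]
      rfl

lemma applyChain_continuous {M : ∀ n, L n → L (n+1) → ℝ} (n : ℕ) :
    ∀ k, Continuous fun φ : L (n+k) → ℝ => applyChain M n k φ := by
  intro k
  induction k with
  | zero => exact continuous_id
  | succ k ih =>
      show Continuous fun φ : L (n+k+1) → ℝ =>
        applyChain M n k (fun v => ∑ w, M (n+k) v w * φ w)
      refine ih.comp ?_
      refine continuous_pi fun v => ?_
      exact continuous_finset_sum _ fun w _ => continuous_const.mul (continuous_apply w)
end

def toEuc {X : Type} [Fintype X] (φ : X → ℝ) : EuclideanSpace ℝ X := WithLp.toLp 2 φ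

lemma enorm_eq {X : Type} [Fintype X] (φ : X → ℝ) : euclEnorm φ = ‖toEuc φ‖ := by
  rw [EuclideanSpace.norm_eq]
  simp [euclEnorm, toEuc, Real.norm_eq_abs, sq_abs]

lemma enorm_nonneg {X : Type} [Fintype X] (φ : X → ℝ) : 0 ≤ euclEnorm φ :=
  Real.sqrt_nonneg _

lemma toEuc_sub {X : Type} [Fintype X] (φ χ : X → ℝ) :
    toEuc (fun x => φ x - χ x) = toEuc φ - toEuc χ := rfl

lemma enorm_dist {X : Type} [Fintype X] (φ χ : X → ℝ) :
    euclEnorm (fun x => φ x - χ x) = dist (toEuc φ) (toEuc χ) := by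
  rw [enorm_eq, dist_eq_norm, toEuc_sub]

lemma euclEnorm_smul {X : Type} [Fintype X] (c : ℝ) (φ : X → ℝ) :
    euclEnorm (fun x => c * φ x) = |c| * euclEnorm φ := by
  have : toEuc (fun x => c * φ x) = c • toEuc φ := rfl
  rw [enorm_eq, this, norm_smul, enorm_eq, Real.norm_eq_abs]

lemma abs_le_enorm {X : Type} [Fintype X] (φ : X → ℝ) (x : X) : |φ x| ≤ euclEnorm φ := by
  rw [← Real.sqrt_sq_eq_abs]
  exact Real.sqrt_le_sqrt (Finset.single_le_sum (fun i _ => sq_nonneg (φ i)) (Finset.mem_univ x))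

lemma enorm_le_card_mul {X : Type} [Fintype X] (φ : X → ℝ) (M : ℝ) (hM : 0 ≤ M)
    (h : ∀ x, |φ x| ≤ M) : euclEnorm φ ≤ Real.sqrt (Fintype.card X) * M := by
  have h1 : ∑ x, φ x ^ 2 ≤ (Fintype.card X : ℝ) * M ^ 2 := by
    calc ∑ x, φ x ^ 2 ≤ ∑ _x : X, M ^ 2 := by
          refine Finset.sum_le_sum fun x _ => ?_
          have := h x
          nlinarith [abs_nonneg (φ x), sq_abs (φ x)]
      _ = (Fintype.card X : ℝ) * M ^ 2 := by simp [Finset.sum_const, mul_comm]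
  calc euclEnorm φ ≤ Real.sqrt ((Fintype.card X : ℝ) * M ^ 2) := Real.sqrt_le_sqrt h1
    _ = Real.sqrt (Fintype.card X) * M := by
        rw [Real.sqrt_mul (by positivity), Real.sqrt_sq hM]

/-- Frobenius-type bound. -/
lemma enorm_matvec_le_frob {X Y : Type} [Fintype X] [Fintype Y] (M : X → Y → ℝ) (φ : Y → ℝ) :
    euclEnorm (fun x => ∑ y, M x y * φ y) ≤ Real.sqrt (∑ x, ∑ y, M x y ^ 2) * euclEnorm φ := by
  have key : ∑ x, (∑ y, M x y * φ y) ^ 2 ≤ (∑ x, ∑ y, M x y ^ 2) * (∑ y, φ y ^ 2) := by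
    rw [Finset.sum_mul]
    refine Finset.sum_le_sum fun x _ => ?_
    exact Finset.sum_mul_sq_le_sq_mul_sq Finset.univ (M x) φ
  calc euclEnorm (fun x => ∑ y, M x y * φ y) ≤ Real.sqrt ((∑ x, ∑ y, M x y ^ 2) * (∑ y, φ y ^ 2)) :=
        Real.sqrt_le_sqrt key
    _ = _ := by
        rw [Real.sqrt_mul]
        · rfl
        · positivity

lemma opNorm_bddAbove {X Y : Type} [Fintype X] [Fintype Y] (M : X → Y → ℝ) :
    BddAbove (Set.range fun ψ : {ψ : Y → ℝ // euclEnorm ψ ≤ 1} =>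
      euclEnorm fun x => ∑ y, M x y * ψ.val y) := by
  refine ⟨Real.sqrt (∑ x, ∑ y, M x y ^ 2), ?_⟩
  rintro r ⟨ψ, rfl⟩
  calc euclEnorm (fun x => ∑ y, M x y * ψ.val y)
      ≤ Real.sqrt (∑ x, ∑ y, M x y ^ 2) * euclEnorm ψ.val := enorm_matvec_le_frob M ψ.val
    _ ≤ Real.sqrt (∑ x, ∑ y, M x y ^ 2) * 1 := by
        exact mul_le_mul_of_nonneg_left ψ.2 (Real.sqrt_nonneg _)
    _ = _ := mul_one _

lemma opNorm_nonneg {X Y : Type} [Fintype X] [Fintype Y] (M : X → Y → ℝ) : 0 ≤ opNorm M := by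
  have h0 : euclEnorm (fun _ : Y => (0:ℝ)) ≤ 1 := by
    simp [euclEnorm]
  have := le_ciSup (opNorm_bddAbove M) ⟨(fun _ => 0), h0⟩
  simp [euclEnorm] at this
  exact this

lemma enorm_matvec_le {X Y : Type} [Fintype X] [Fintype Y] (M : X → Y → ℝ) (φ : Y → ℝ) :
    euclEnorm (fun x => ∑ y, M x y * φ y) ≤ opNorm M * euclEnorm φ := by
  rcases eq_or_lt_of_le (enorm_nonneg φ) with h0 | hpos
  · have : toEuc φ = 0 := by
      rw [← norm_eq_zero, ← enorm_eq, ← h0]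
    have hφ : φ = fun _ => 0 := by
      funext y
      have : (toEuc φ) y = (0 : EuclideanSpace ℝ Y) y := by rw [this]
      simpa [toEuc] using this
    subst hφ
    simp [euclEnorm, ← h0]
  · set c := euclEnorm φ with hc
    have hψ : euclEnorm (fun y => c⁻¹ * φ y) ≤ 1 := by
      rw [euclEnorm_smul, abs_of_pos (inv_pos.2 hpos), ← hc, inv_mul_cancel₀ (ne_of_gt hpos)]
    have hle := le_ciSup (opNorm_bddAbove M) ⟨(fun y => c⁻¹ * φ y), hψ⟩
    have heq : (euclEnorm fun x => ∑ y, M x y * (c⁻¹ * φ y)) = c⁻¹ * euclEnorm (fun x => ∑ y, M x y * φ y) := by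
      have : (fun x => ∑ y, M x y * (c⁻¹ * φ y)) = fun x => c⁻¹ * ∑ y, M x y * φ y := by
        funext x
        rw [Finset.mul_sum]
        congr 1; funext y; ring
      rw [this, euclEnorm_smul, abs_of_pos (inv_pos.2 hpos)]
    rw [heq] at hle
    calc euclEnorm (fun x => ∑ y, M x y * φ y) = c * (c⁻¹ * euclEnorm (fun x => ∑ y, M x y * φ y)) := by
          field_simp
      _ ≤ c * opNorm M := mul_le_mul_of_nonneg_left hle (le_of_lt hpos)
      _ = opNorm M * c := mul_comm _ _

lemma euclEnorm_neg {X : Type} [Fintype X] (φ : X → ℝ) : euclEnorm (fun x => -φ x) = euclEnorm φ := by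
  have : toEuc (fun x => -φ x) = -toEuc φ := rfl
  rw [enorm_eq, this, norm_neg, ← enorm_eq]

lemma opNorm_sub_comm {X Y : Type} [Fintype X] [Fintype Y] (M M' : X → Y → ℝ) :
    opNorm (fun v w => M v w - M' v w) = opNorm (fun v w => M' v w - M v w) := by
  unfold opNorm
  refine iSup_congr fun ψ => ?_
  have : (fun x => ∑ y, (M x y - M' x y) * ψ.val y)
      = fun x => -∑ y, (M' x y - M x y) * ψ.val y := by
    funext x
    rw [← Finset.sum_neg_distrib]
    congr 1; funext y; ring
  rw [this, euclEnorm_neg]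

lemma opNorm_le_add {X Y : Type} [Fintype X] [Fintype Y] (M₁ M₂ : X → Y → ℝ) :
    opNorm M₂ ≤ opNorm M₁ + opNorm (fun v w => M₁ v w - M₂ v w) := by
  have hne : Nonempty {ψ : Y → ℝ // euclEnorm ψ ≤ 1} := ⟨⟨fun _ => 0, by simp [euclEnorm]⟩⟩
  refine ciSup_le fun ψ => ?_
  have key : toEuc (fun x => ∑ y, M₂ x y * ψ.val y)
      = toEuc (fun x => ∑ y, M₁ x y * ψ.val y)
        - toEuc (fun x => ∑ y, (M₁ x y - M₂ x y) * ψ.val y) := by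
    ext x
    show (∑ y, M₂ x y * ψ.val y) = (∑ y, M₁ x y * ψ.val y) - ∑ y, (M₁ x y - M₂ x y) * ψ.val y
    rw [← Finset.sum_sub_distrib]
    congr 1; funext y; ring
  have h1 : euclEnorm (fun x => ∑ y, M₂ x y * ψ.val y)
      ≤ euclEnorm (fun x => ∑ y, M₁ x y * ψ.val y)
        + euclEnorm (fun x => ∑ y, (M₁ x y - M₂ x y) * ψ.val y) := by
    rw [enorm_eq, key, enorm_eq, enorm_eq]
    exact norm_sub_le _ _
  refine h1.trans (add_le_add ?_ ?_)
  · calc euclEnorm (fun x => ∑ y, M₁ x y * ψ.val y) ≤ opNorm M₁ * euclEnorm ψ.val :=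
        enorm_matvec_le _ _
      _ ≤ opNorm M₁ * 1 := mul_le_mul_of_nonneg_left ψ.2 (opNorm_nonneg _)
      _ = _ := mul_one _
  · calc euclEnorm (fun x => ∑ y, (M₁ x y - M₂ x y) * ψ.val y)
        ≤ opNorm (fun v w => M₁ v w - M₂ v w) * euclEnorm ψ.val := enorm_matvec_le _ _
      _ ≤ _ * 1 := mul_le_mul_of_nonneg_left ψ.2 (opNorm_nonneg _)
      _ = _ := mul_one _

section
variable {L : ℕ → Type} [∀ n, Fintype (L n)] [∀ n, Nonempty (L n)]

lemma pathMat_pos {v0 : L 0} {A : ∀ n, L n → L (n+1) → ℝ}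
    (hnn : ∀ n v w, 0 ≤ A n v w) (hne : ∀ k (w : L k), pathMat A k v0 w ≠ 0)
    (k : ℕ) (w : L k) : 0 < pathMat A k v0 w :=
  lt_of_le_of_ne (pathMat_nonneg hnn k v0 w) (Ne.symm (hne k w))

lemma le_iSup_inv_pathMat {v0 : L 0} (A : ∀ n, L n → L (n+1) → ℝ) (k : ℕ) (w : L k) :
    (pathMat A k v0 w)⁻¹ ≤ ⨆ u : L k, (pathMat A k v0 u)⁻¹ :=
  le_ciSup (f := fun u : L k => (pathMat A k v0 u)⁻¹) (Set.Finite.bddAbove (Set.finite_range _)) w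

lemma Lconst_pos {v0 : L 0} {A : ∀ n, L n → L (n+1) → ℝ}
    (hnn : ∀ n v w, 0 ≤ A n v w) (hne : ∀ k (w : L k), pathMat A k v0 w ≠ 0)
    (k : ℕ) : 0 < Lconst v0 A k := by
  refine mul_pos ?_ ?_
  · have : (0:ℝ) < Fintype.card (L k) := by
      exact_mod_cast Fintype.card_pos
    exact Real.sqrt_pos.2 this
  · obtain ⟨w⟩ := ‹∀ n, Nonempty (L n)› k
    exact lt_of_lt_of_le (inv_pos.2 (pathMat_pos hnn hne k w)) (le_iSup_inv_pathMat A k w)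

/-- coordinate bound for members of an inverse limit dominating `A`. -/
lemma invLimit_coord_le {v0 : L 0} {A M' : ∀ n, L n → L (n+1) → ℝ}
    (hAnn : ∀ n v w, 0 ≤ A n v w) (hAne : ∀ k (w : L k), pathMat A k v0 w ≠ 0)
    (hM'nn : ∀ n v w, 0 ≤ M' n v w)
    (hpath : ∀ k (w : L k), pathMat A k v0 w ≤ pathMat M' k v0 w)
    {ψ : ∀ n, L n → ℝ} (hψ : ψ ∈ InvLimit M') (k : ℕ) (w : L k) :
    ψ k w ≤ ψ 0 v0 * (pathMat A k v0 w)⁻¹ := by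
  have hpos := pathMat_pos hAnn hAne k w
  have h2 : ψ k w * pathMat A k v0 w ≤ ψ 0 v0 := by
    calc ψ k w * pathMat A k v0 w = pathMat A k v0 w * ψ k w := mul_comm _ _
      _ ≤ pathMat M' k v0 w * ψ k w :=
          mul_le_mul_of_nonneg_right (hpath k w) (hψ.1 k w)
      _ ≤ ∑ u, pathMat M' k v0 u * ψ k u :=
          Finset.single_le_sum
            (fun u _ => mul_nonneg (pathMat_nonneg hM'nn k v0 u) (hψ.1 k u))
            (Finset.mem_univ w)
      _ = ψ 0 v0 := (invLimit_path hψ v0 k).symm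
  rw [← div_eq_mul_inv]
  exact (le_div_iff₀ hpos).2 h2

/-- Euclidean norm bound `‖ψ^k‖ ≤ L_k ψ^0(v₀)`. -/
lemma invLimit_enorm_le {v0 : L 0} {A M' : ∀ n, L n → L (n+1) → ℝ}
    (hAnn : ∀ n v w, 0 ≤ A n v w) (hAne : ∀ k (w : L k), pathMat A k v0 w ≠ 0)
    (hM'nn : ∀ n v w, 0 ≤ M' n v w)
    (hpath : ∀ k (w : L k), pathMat A k v0 w ≤ pathMat M' k v0 w)
    {ψ : ∀ n, L n → ℝ} (hψ : ψ ∈ InvLimit M') (k : ℕ) :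
    euclEnorm (ψ k) ≤ Lconst v0 A k * ψ 0 v0 := by
  have hψ0 : 0 ≤ ψ 0 v0 := hψ.1 0 v0
  have hsup : 0 ≤ ⨆ u : L k, (pathMat A k v0 u)⁻¹ := by
    obtain ⟨w⟩ := ‹∀ n, Nonempty (L n)› k
    exact le_trans (le_of_lt (inv_pos.2 (pathMat_pos hAnn hAne k w)))
      (le_iSup_inv_pathMat A k w)
  have hM : ∀ w, |ψ k w| ≤ (⨆ u : L k, (pathMat A k v0 u)⁻¹) * ψ 0 v0 := by
    intro w
    rw [abs_of_nonneg (hψ.1 k w)]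
    calc ψ k w ≤ ψ 0 v0 * (pathMat A k v0 w)⁻¹ :=
          invLimit_coord_le hAnn hAne hM'nn hpath hψ k w
      _ ≤ ψ 0 v0 * ⨆ u : L k, (pathMat A k v0 u)⁻¹ :=
          mul_le_mul_of_nonneg_left (le_iSup_inv_pathMat A k w) hψ0
      _ = _ := mul_comm _ _
  calc euclEnorm (ψ k) ≤ Real.sqrt (Fintype.card (L k)) *
        ((⨆ u : L k, (pathMat A k v0 u)⁻¹) * ψ 0 v0) :=
        enorm_le_card_mul _ _ (mul_nonneg hsup hψ0) hM
    _ = Lconst v0 A k * ψ 0 v0 := by rw [Lconst, mul_assoc]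

/-- norm bound for chains. -/
lemma enorm_applyChain_le {M : ∀ n, L n → L (n+1) → ℝ} (n : ℕ) :
    ∀ k (φ : L (n+k) → ℝ),
      euclEnorm (applyChain M n k φ) ≤ (∏ i ∈ Finset.range k, opNorm (M (n+i))) * euclEnorm φ := by
  intro k
  induction k with
  | zero => intro φ; simp; exact le_of_eq rfl
  | succ k ih =>
      intro φ
      calc euclEnorm (applyChain M n (k+1) φ)
          = euclEnorm (applyChain M n k (fun v => ∑ w, M (n+k) v w * φ w)) := rfl
        _ ≤ (∏ i ∈ Finset.range k, opNorm (M (n+i))) *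
              euclEnorm (fun v => ∑ w, M (n+k) v w * φ w) := ih _
        _ ≤ (∏ i ∈ Finset.range k, opNorm (M (n+i))) * (opNorm (M (n+k)) * euclEnorm φ) := by
            refine mul_le_mul_of_nonneg_left (enorm_matvec_le _ _) ?_
            exact Finset.prod_nonneg fun i _ => opNorm_nonneg _
        _ = (∏ i ∈ Finset.range (k+1), opNorm (M (n+i))) * euclEnorm φ := by
            rw [Finset.prod_range_succ]; ring

lemma applyChain_sub {M : ∀ n, L n → L (n+1) → ℝ} (n k : ℕ) (φ χ : L (n+k) → ℝ) :
    applyChain M n k (fun w => φ w - χ w)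
      = fun v => applyChain M n k φ v - applyChain M n k χ v := by
  have := applyChain_combo (M := M) n 1 (-1) k φ χ
  simpa [sub_eq_add_neg] using this

/-- The increment estimate: one step of the telescoping. -/
lemma incr_bound {v0 : L 0} {A M M' : ∀ n, L n → L (n+1) → ℝ}
    (hAnn : ∀ n v w, 0 ≤ A n v w) (hAne : ∀ k (w : L k), pathMat A k v0 w ≠ 0)
    (hM'nn : ∀ n v w, 0 ≤ M' n v w)
    (hpath : ∀ k (w : L k), pathMat A k v0 w ≤ pathMat M' k v0 w)
    {ψ : ∀ n, L n → ℝ} (hψ : ψ ∈ InvLimit M') (n k : ℕ) (d : ℝ)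
    (hδ : opNorm (fun v w => M' (n+k) v w - M (n+k) v w) ≤ d) :
    euclEnorm (fun v => applyChain M n (k+1) (ψ (n+(k+1))) v - applyChain M n k (ψ (n+k)) v)
      ≤ (∏ i ∈ Finset.range k, opNorm (M (n+i))) *
          (d * (Lconst v0 A (n+k+1) * ψ 0 v0)) := by
  have hd : 0 ≤ d := le_trans (opNorm_nonneg _) hδ
  have e2 : ψ (n+k) = fun v => ∑ w, M' (n+k) v w * ψ (n+k+1) w :=
    funext fun v => hψ.2 (n+k) v
  have key : (fun v => applyChain M n (k+1) (ψ (n+(k+1))) v - applyChain M n k (ψ (n+k)) v)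
      = applyChain M n k (fun v => ∑ w, (M (n+k) v w - M' (n+k) v w) * ψ (n+k+1) w) := by
    have e1 : applyChain M n (k+1) (ψ (n+(k+1)))
        = applyChain M n k (fun v => ∑ w, M (n+k) v w * ψ (n+k+1) w) := rfl
    rw [e1, e2, ← applyChain_sub]
    congr 1
    funext v
    simp [sub_mul, Finset.sum_sub_distrib]
  rw [key]
  calc euclEnorm (applyChain M n k (fun v => ∑ w, (M (n+k) v w - M' (n+k) v w) * ψ (n+k+1) w))
      ≤ (∏ i ∈ Finset.range k, opNorm (M (n+i))) *
          euclEnorm (fun v => ∑ w, (M (n+k) v w - M' (n+k) v w) * ψ (n+k+1) w) :=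
        enorm_applyChain_le n k _
    _ ≤ (∏ i ∈ Finset.range k, opNorm (M (n+i))) * (d * (Lconst v0 A (n+k+1) * ψ 0 v0)) := by
        refine mul_le_mul_of_nonneg_left ?_
          (Finset.prod_nonneg fun i _ => opNorm_nonneg _)
        calc euclEnorm (fun v => ∑ w, (M (n+k) v w - M' (n+k) v w) * ψ (n+k+1) w)
            ≤ opNorm (fun v w => M (n+k) v w - M' (n+k) v w) * euclEnorm (ψ (n+k+1)) :=
              enorm_matvec_le _ _
          _ ≤ d * (Lconst v0 A (n+k+1) * ψ 0 v0) := by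
              refine mul_le_mul ?_ ?_ (enorm_nonneg _) hd
              · rw [opNorm_sub_comm]; exact hδ
              · exact invLimit_enorm_le hAnn hAne hM'nn hpath hψ (n+k+1)

end

open Filter in

lemma geom_limit {E : Type} [MetricSpace E] [CompleteSpace E]
    (F : ℕ → E) (C : ℝ) (n N : ℕ)
    (h : ∀ k, N ≤ n+k+1 → dist (F k) (F (k+1)) ≤ C * ((2:ℝ)⁻¹)^(n+k+1)) :
    ∃ x, Tendsto F atTop (nhds x) ∧
      ∀ k, N ≤ n+k+1 → dist (F k) x ≤ C * ((2:ℝ)⁻¹)^(n+k) := by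
  have h2 : (2:ℝ)⁻¹ < 1 := by norm_num
  have hshift : ∀ (m : ℕ), N ≤ n+m+1 →
      ∀ j, dist (F (j+m)) (F (j+1+m)) ≤ (C * ((2:ℝ)⁻¹)^(n+m+1)) * ((2:ℝ)⁻¹)^j := by
    intro m hm j
    have e : j+1+m = j+m+1 := by omega
    rw [e]
    have := h (j+m) (by omega)
    calc dist (F (j+m)) (F (j+m+1)) ≤ C * ((2:ℝ)⁻¹)^(n+(j+m)+1) := this
      _ = (C * ((2:ℝ)⁻¹)^(n+m+1)) * ((2:ℝ)⁻¹)^j := by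
          rw [mul_assoc, ← pow_add]
          congr 2
          omega
  have hcau : CauchySeq (fun j => F (j+N)) :=
    cauchySeq_of_le_geometric (2:ℝ)⁻¹ (C * ((2:ℝ)⁻¹)^(n+N+1)) h2
      (hshift N (by omega))
  obtain ⟨x, hx⟩ := cauchySeq_tendsto_of_complete hcau
  have hxF : Tendsto F atTop (nhds x) := (tendsto_add_atTop_iff_nat N).1 hx
  refine ⟨x, hxF, fun k hk => ?_⟩
  have hxH : Tendsto (fun j => F (j+k)) atTop (nhds x) :=
    (tendsto_add_atTop_iff_nat k).2 hxF
  have hd := dist_le_of_le_geometric_of_tendsto₀ (2:ℝ)⁻¹ (C * ((2:ℝ)⁻¹)^(n+k+1))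
    h2 (hshift k hk) hxH
  have : (C * ((2:ℝ)⁻¹)^(n+k+1)) / (1 - 2⁻¹) = C * ((2:ℝ)⁻¹)^(n+k) := by
    rw [pow_succ]
    ring
  rw [this] at hd
  simpa using hd


lemma one_le_prodR {s : Finset ℕ} {f : ℕ → ℝ} (h : ∀ j ∈ s, 1 ≤ f j) :
    1 ≤ ∏ j ∈ s, f j := by
  have := Finset.prod_le_prod (s := s) (f := fun _ => (1:ℝ)) (g := f)
    (fun i _ => zero_le_one) h
  simpa using this

lemma prod_le_prod_subsetR {s t : Finset ℕ} (hst : s ⊆ t) {f : ℕ → ℝ}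
    (h : ∀ j ∈ t, 1 ≤ f j) : ∏ j ∈ s, f j ≤ ∏ j ∈ t, f j := by
  rw [← Finset.prod_sdiff hst]
  have h1 : 1 ≤ ∏ j ∈ t \ s, f j :=
    one_le_prodR fun j hj => h j (Finset.mem_sdiff.1 hj).1
  have h2 : 0 ≤ ∏ j ∈ s, f j :=
    le_trans zero_le_one (one_le_prodR fun j hj => h j (hst hj))
  nlinarith

lemma prod_shift_le {h : ℕ → ℝ} (h1 : ∀ j, 1 ≤ h j) (n c : ℕ) :
    ∏ l ∈ Finset.range c, h (n+l) ≤ ∏ j ∈ Finset.range (n+c), h j := by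
  rw [Finset.prod_range_add]
  have hn : 1 ≤ ∏ j ∈ Finset.range n, h j := one_le_prodR fun j _ => h1 j
  have hc : 0 ≤ ∏ l ∈ Finset.range c, h (n+l) :=
    le_trans zero_le_one (one_le_prodR fun j _ => h1 _)
  nlinarith

lemma prod_e_le {b : ℕ → ℝ} (hb : ∀ j, 1 ≤ b j) (N M : ℕ) :
    ∏ j ∈ Finset.range M, (if N ≤ j+1 then (1:ℝ) else b j) ≤ ∏ j ∈ Finset.range N, b j := by
  classical
  set e := fun j => if N ≤ j+1 then (1:ℝ) else b j with he
  have key := Finset.prod_filter_mul_prod_filter_not (Finset.range M)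
    (fun j => N ≤ j+1) e
  have hp1 : ∏ j ∈ (Finset.range M).filter (fun j => N ≤ j+1), e j = 1 :=
    Finset.prod_eq_one fun j hj => by
      simp only [Finset.mem_filter] at hj
      simp [he, hj.2]
  have hp2 : ∏ j ∈ (Finset.range M).filter (fun j => ¬ N ≤ j+1), e j
      = ∏ j ∈ (Finset.range M).filter (fun j => ¬ N ≤ j+1), b j :=
    Finset.prod_congr rfl fun j hj => by
      simp only [Finset.mem_filter] at hj
      simp [he, hj.2]
  calc ∏ j ∈ Finset.range M, e j
      = ∏ j ∈ (Finset.range M).filter (fun j => ¬ N ≤ j+1), b j := by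
        rw [← key, hp1, one_mul, hp2]
    _ ≤ ∏ j ∈ Finset.range N, b j := by
        refine prod_le_prod_subsetR ?_ fun j _ => hb j
        intro j hj
        simp only [Finset.mem_filter, Finset.mem_range] at hj ⊢
        omega

lemma key_prod_aux {h : ℕ → ℝ} (h1 : ∀ j, 1 ≤ h j) {u v : ℕ → ℝ}
    (hu : ∀ j, 0 ≤ u j) (hu' : ∀ j, u j ≤ h j) (hv : ∀ j, 0 ≤ v j) (hv' : ∀ j, v j ≤ h j)
    (n k i : ℕ) :
    (∏ l ∈ Finset.range k, u (n+l)) * ∏ l ∈ Finset.range i, v (n+k+l)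
      ≤ ∏ j ∈ Finset.range (n+k+i), h j := by
  have s1 : (∏ l ∈ Finset.range k, u (n+l)) * ∏ l ∈ Finset.range i, v (n+k+l)
      ≤ (∏ l ∈ Finset.range k, h (n+l)) * ∏ l ∈ Finset.range i, h (n+k+l) := by
    refine mul_le_mul (Finset.prod_le_prod (fun l _ => hu _) (fun l _ => hu' _))
      (Finset.prod_le_prod (fun l _ => hv _) (fun l _ => hv' _))
      (Finset.prod_nonneg fun l _ => hv _) (Finset.prod_nonneg fun l _ => ?_)
    exact le_trans zero_le_one (h1 _)
  have s2 : (∏ l ∈ Finset.range k, h (n+l)) * ∏ l ∈ Finset.range i, h (n+k+l)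
      = ∏ l ∈ Finset.range (k+i), h (n+l) := by
    rw [Finset.prod_range_add]
    congr 1
    refine Finset.prod_congr rfl fun l _ => ?_
    congr 1
    omega
  calc _ ≤ _ := s1
    _ = _ := s2
    _ ≤ ∏ j ∈ Finset.range (n+(k+i)), h j := prod_shift_le h1 n (k+i)
    _ = ∏ j ∈ Finset.range (n+k+i), h j := by rw [← add_assoc]

section Master
variable {L : ℕ → Type} [∀ n, Fintype (L n)] [∀ n, Nonempty (L n)]

open Filter Finset

/-- the combined per-level factor. -/
def hfun (A B : ∀ n, L n → L (n+1) → ℝ) (N j : ℕ) : ℝ :=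
  (opNorm (A j) + 1) * (if N ≤ j+1 then 1 else opNorm (B j) + 1)

def Pprod (A : ∀ n, L n → L (n+1) → ℝ) (m : ℕ) : ℝ :=
  ∏ j ∈ Finset.range m, (opNorm (A j) + 1)

def CcC (B : ∀ n, L n → L (n+1) → ℝ) (N : ℕ) : ℝ :=
  ∏ j ∈ Finset.range N, (opNorm (B j) + 1)

variable {A B : ∀ n, L n → L (n+1) → ℝ} {N : ℕ}

lemma one_le_hfun (j : ℕ) : 1 ≤ hfun A B N j := by
  unfold hfun
  have h1 : (1:ℝ) ≤ opNorm (A j) + 1 := by linarith [opNorm_nonneg (A j)]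
  have h2 : (1:ℝ) ≤ (if N ≤ j+1 then 1 else opNorm (B j) + 1) := by
    split
    · exact le_refl 1
    · linarith [opNorm_nonneg (B j)]
  nlinarith

lemma opA_le_hfun (j : ℕ) : opNorm (A j) ≤ hfun A B N j := by
  unfold hfun
  have h2 : (1:ℝ) ≤ (if N ≤ j+1 then 1 else opNorm (B j) + 1) := by
    split
    · exact le_refl 1
    · linarith [opNorm_nonneg (B j)]
  nlinarith [opNorm_nonneg (A j)]

lemma opB_le_hfun (ε : ℕ → ℝ) (hε : ∀ k, 0 < ε k ∧ ε k < 1)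
    (hclose : ∀ n : ℕ, N ≤ n + 1 → opNorm (fun v w => A n v w - B n v w) ≤ ε n)
    (j : ℕ) : opNorm (B j) ≤ hfun A B N j := by
  unfold hfun
  by_cases hj : N ≤ j+1
  · rw [if_pos hj, mul_one]
    have h1 := opNorm_le_add (A j) (B j)
    have h2 := hclose j hj
    have h3 := (hε j).2
    linarith
  · rw [if_neg hj]
    have h0 := opNorm_nonneg (A j)
    have h1 := opNorm_nonneg (B j)
    nlinarith

lemma one_le_Pprod (m : ℕ) : 1 ≤ Pprod A m :=
  one_le_prodR fun j _ => by linarith [opNorm_nonneg (A j)]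

lemma one_le_CcC : 1 ≤ CcC B N :=
  one_le_prodR fun j _ => by linarith [opNorm_nonneg (B j)]

lemma prod_hfun_le (m : ℕ) :
    ∏ j ∈ Finset.range m, hfun A B N j ≤ CcC B N * Pprod A m := by
  unfold hfun CcC Pprod
  rw [Finset.prod_mul_distrib]
  have h1 := prod_e_le (b := fun j => opNorm (B j) + 1)
    (fun j => by show (1:ℝ) ≤ opNorm (B j) + 1; linarith [opNorm_nonneg (B j)]) N m
  have h2 : (0:ℝ) ≤ ∏ j ∈ Finset.range m, (opNorm (A j) + 1) :=
    le_trans zero_le_one (one_le_prodR fun j _ => by linarith [opNorm_nonneg (A j)])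
  calc (∏ j ∈ Finset.range m, (opNorm (A j) + 1)) *
        ∏ j ∈ Finset.range m, (if N ≤ j+1 then (1:ℝ) else opNorm (B j) + 1)
      ≤ (∏ j ∈ Finset.range m, (opNorm (A j) + 1)) * ∏ j ∈ Finset.range N, (opNorm (B j) + 1) :=
        mul_le_mul_of_nonneg_left h1 h2
    _ = _ := mul_comm _ _

lemma master (v0 : L 0)
    (hAnn : ∀ n v w, 0 ≤ A n v w) (hAne : ∀ k (w : L k), pathMat A k v0 w ≠ 0)
    (ε : ℕ → ℝ) (hε : ∀ k, 0 < ε k ∧ ε k < 1)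
    (hεsmall : ∀ n : ℕ, N ≤ n + 1 →
      ε n ≤ ((2 : ℝ) ^ (n + 1))⁻¹ *
        (Lconst v0 A (n + 1) * ∏ j ∈ Finset.range n, (opNorm (A j) + 1))⁻¹)
    {M M' : ∀ n, L n → L (n+1) → ℝ}
    (hM'nn : ∀ n v w, 0 ≤ M' n v w)
    (hpath : ∀ k (w : L k), pathMat A k v0 w ≤ pathMat M' k v0 w)
    (hMh : ∀ j, opNorm (M j) ≤ hfun A B N j)
    (hδ : ∀ j, N ≤ j+1 → opNorm (fun v w => M' j v w - M j v w) ≤ ε j)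
    {ψ : ∀ n, L n → ℝ} (hψ : ψ ∈ InvLimit M') (n : ℕ) :
    ∃ x : EuclideanSpace ℝ (L n),
      Tendsto (fun k => toEuc (applyChain M n k (ψ (n+k)))) atTop (nhds x) ∧
      ∀ k, N ≤ n+k+1 → dist (toEuc (applyChain M n k (ψ (n+k)))) x
        ≤ (CcC B N * ψ 0 v0) * ((2:ℝ)⁻¹)^(n+k) := by
  have hψ0 : 0 ≤ ψ 0 v0 := hψ.1 0 v0
  have hCc : (1:ℝ) ≤ CcC B N := one_le_CcC
  refine geom_limit _ (CcC B N * ψ 0 v0) n N ?_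
  intro k hk
  rw [dist_comm, ← enorm_dist]
  refine le_trans (incr_bound hAnn hAne hM'nn hpath hψ n k (ε (n+k)) (hδ (n+k) hk)) ?_
  set m := n + k with hm
  set Lc := Lconst v0 A (m+1) with hLcdef
  set Pm := ∏ j ∈ Finset.range m, (opNorm (A j) + 1) with hPmdef
  have hPk : (∏ i ∈ Finset.range k, opNorm (M (n+i))) ≤ CcC B N * Pm := by
    have h0 := key_prod_aux (h := hfun A B N) one_le_hfun
      (u := fun j => opNorm (M j)) (fun j => opNorm_nonneg _) hMh
      (v := fun j => opNorm (M j)) (fun j => opNorm_nonneg _) hMh n k 0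
    simp only [Finset.range_zero, Finset.prod_empty, mul_one, Nat.add_zero] at h0
    calc (∏ i ∈ Finset.range k, opNorm (M (n+i)))
        ≤ ∏ j ∈ Finset.range (n+k), hfun A B N j := h0
      _ ≤ CcC B N * Pprod A (n+k) := prod_hfun_le (n+k)
      _ = CcC B N * Pm := by rw [Pprod]
  have hεb : ε m ≤ ((2:ℝ)^(m+1))⁻¹ * (Lc * Pm)⁻¹ := hεsmall m hk
  have hLc : 0 < Lc := Lconst_pos hAnn hAne (m+1)
  have hPm1 : (1:ℝ) ≤ Pm := one_le_prodR fun j _ => by linarith [opNorm_nonneg (A j)]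
  have hPm0 : (0:ℝ) < Pm := lt_of_lt_of_le zero_lt_one hPm1
  have hεpos := (hε m).1
  have hLψ : 0 ≤ Lc * ψ 0 v0 := mul_nonneg hLc.le hψ0
  calc (∏ i ∈ Finset.range k, opNorm (M (n+i))) * (ε m * (Lc * ψ 0 v0))
      ≤ (CcC B N * Pm) * (ε m * (Lc * ψ 0 v0)) := by
        refine mul_le_mul_of_nonneg_right hPk (mul_nonneg hεpos.le hLψ)
    _ ≤ (CcC B N * Pm) * ((((2:ℝ)^(m+1))⁻¹ * (Lc * Pm)⁻¹) * (Lc * ψ 0 v0)) := by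
        refine mul_le_mul_of_nonneg_left
          (mul_le_mul_of_nonneg_right hεb hLψ)
          (mul_nonneg (by linarith) hPm0.le)
    _ = (CcC B N * ψ 0 v0) * ((2:ℝ)⁻¹)^(m+1) := by
        rw [inv_pow]
        field_simp

lemma tendsto_pi_of_tendsto_euc {X : Type} [Fintype X] {f : ℕ → (X → ℝ)}
    {x : EuclideanSpace ℝ X}
    (h : Tendsto (fun k => toEuc (f k)) atTop (nhds x)) :
    Tendsto f atTop (nhds ((WithLp.equiv 2 (X → ℝ)) x)) := by
  have hc : Continuous (WithLp.equiv 2 (X → ℝ)) := PiLp.continuous_ofLp 2 (fun _ : X => ℝ)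
  exact ((hc.tendsto x).comp h : _)

lemma cancel_arith (v0 : L 0)
    (hAnn : ∀ n v w, 0 ≤ A n v w) (hAne : ∀ k (w : L k), pathMat A k v0 w ≠ 0)
    (ε : ℕ → ℝ) (hε : ∀ k, 0 < ε k ∧ ε k < 1)
    (hεsmall : ∀ n : ℕ, N ≤ n + 1 →
      ε n ≤ ((2 : ℝ) ^ (n + 1))⁻¹ *
        (Lconst v0 A (n + 1) * ∏ j ∈ Finset.range n, (opNorm (A j) + 1))⁻¹)
    (m : ℕ) (hm : N ≤ m+1) (c ψ0 : ℝ) (hψ0 : 0 ≤ ψ0) (hcnn : 0 ≤ c)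
    (hc : c ≤ CcC B N * Pprod A m) :
    c * (ε m * (Lconst v0 A (m+1) * ψ0)) ≤ (CcC B N * ψ0) * ((2:ℝ)⁻¹)^(m+1) := by
  have hCc : (1:ℝ) ≤ CcC B N := one_le_CcC
  set Lc := Lconst v0 A (m+1) with hLcdef
  set Pm := Pprod A m with hPmdef
  have hεb : ε m ≤ ((2:ℝ)^(m+1))⁻¹ * (Lc * Pm)⁻¹ := hεsmall m hm
  have hLc : 0 < Lc := Lconst_pos hAnn hAne (m+1)
  have hPm1 : (1:ℝ) ≤ Pm := one_le_Pprod m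
  have hPm0 : (0:ℝ) < Pm := lt_of_lt_of_le zero_lt_one hPm1
  have hεpos := (hε m).1
  have hLψ : 0 ≤ Lc * ψ0 := mul_nonneg hLc.le hψ0
  calc c * (ε m * (Lc * ψ0))
      ≤ (CcC B N * Pm) * (ε m * (Lc * ψ0)) :=
        mul_le_mul_of_nonneg_right hc (mul_nonneg hεpos.le hLψ)
    _ ≤ (CcC B N * Pm) * ((((2:ℝ)^(m+1))⁻¹ * (Lc * Pm)⁻¹) * (Lc * ψ0)) :=
        mul_le_mul_of_nonneg_left (mul_le_mul_of_nonneg_right hεb hLψ)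
          (mul_nonneg (by linarith) hPm0.le)
    _ = (CcC B N * ψ0) * ((2:ℝ)⁻¹)^(m+1) := by
        rw [inv_pow]
        field_simp

/-- key lemma for the round trip `S (T ψ) = ψ`. -/
lemma roundtrip (v0 : L 0)
    (hAnn : ∀ n v w, 0 ≤ A n v w) (hAne : ∀ k (w : L k), pathMat A k v0 w ≠ 0)
    (ε : ℕ → ℝ) (hε : ∀ k, 0 < ε k ∧ ε k < 1)
    (hεsmall : ∀ n : ℕ, N ≤ n + 1 →
      ε n ≤ ((2 : ℝ) ^ (n + 1))⁻¹ *
        (Lconst v0 A (n + 1) * ∏ j ∈ Finset.range n, (opNorm (A j) + 1))⁻¹)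
    {M M' : ∀ n, L n → L (n+1) → ℝ}
    (hM'nn : ∀ n v w, 0 ≤ M' n v w)
    (hpath : ∀ k (w : L k), pathMat A k v0 w ≤ pathMat M' k v0 w)
    (hMh : ∀ j, opNorm (M j) ≤ hfun A B N j)
    (hM'h : ∀ j, opNorm (M' j) ≤ hfun A B N j)
    (hδ : ∀ j, N ≤ j+1 → opNorm (fun v w => M' j v w - M j v w) ≤ ε j)
    {ψ : ∀ n, L n → ℝ} (hψ : ψ ∈ InvLimit M')
    {χ : ∀ n, L n → ℝ}
    (hχlim : ∀ n', Tendsto (fun i => applyChain M n' i (ψ (n'+i))) atTop (nhds (χ n')))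
    (n : ℕ) :
    Tendsto (fun k => applyChain M' n k (χ (n+k))) atTop (nhds (ψ n)) := by
  have hψ0 : 0 ≤ ψ 0 v0 := hψ.1 0 v0
  have hCc : (1:ℝ) ≤ CcC B N := one_le_CcC
  -- step 1: the distance bound for each `k ≥ N`
  have hdist : ∀ k, N ≤ k →
      dist (toEuc (applyChain M' n k (χ (n+k)))) (toEuc (ψ n))
        ≤ (CcC B N * ψ 0 v0) * ((2:ℝ)⁻¹)^(n+k) := by
    intro k hk
    set m := n + k with hm
    set W : ℕ → (L n → ℝ) :=
      fun i => applyChain M' n k (applyChain M m i (ψ (m+i))) with hW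
    have hWlim : Tendsto (fun i => toEuc (W i)) atTop
        (nhds (toEuc (applyChain M' n k (χ m)))) := by
      have hc : Continuous fun φ : L m → ℝ => toEuc (applyChain M' n k φ) := by
        exact (PiLp.continuous_toLp 2 (fun _ : L n => ℝ)).comp
          (applyChain_continuous n k)
      exact (hc.tendsto _).comp (hχlim m)
    have hWincr : ∀ i, N ≤ m+i+1 →
        dist (toEuc (W i)) (toEuc (W (i+1)))
          ≤ (CcC B N * ψ 0 v0) * ((2:ℝ)⁻¹)^(m+i+1) := by
      intro i hi
      rw [← enorm_dist]
      have key : (fun v => W i v - W (i+1) v)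
          = applyChain M' n k (fun v =>
              applyChain M m i (ψ (m+i)) v - applyChain M m (i+1) (ψ (m+(i+1))) v) := by
        rw [applyChain_sub]
      have step1 := enorm_applyChain_le (M := M') n k
        (fun v => applyChain M m i (ψ (m+i)) v - applyChain M m (i+1) (ψ (m+(i+1))) v)
      have hneg : euclEnorm (fun v =>
            applyChain M m i (ψ (m+i)) v - applyChain M m (i+1) (ψ (m+(i+1))) v)
          = euclEnorm (fun v =>
            applyChain M m (i+1) (ψ (m+(i+1))) v - applyChain M m i (ψ (m+i)) v) := by
        rw [show (fun v => applyChain M m i (ψ (m+i)) v - applyChain M m (i+1) (ψ (m+(i+1))) v)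
            = fun v => -(applyChain M m (i+1) (ψ (m+(i+1))) v - applyChain M m i (ψ (m+i)) v)
          from funext fun v => by ring]
        exact euclEnorm_neg _
      have step2 := incr_bound hAnn hAne hM'nn hpath hψ m i (ε (m+i)) (hδ (m+i) hi)
      have prodnn : (0:ℝ) ≤ ∏ l ∈ Finset.range k, opNorm (M' (n+l)) :=
        Finset.prod_nonneg fun l _ => opNorm_nonneg _
      have step3 : euclEnorm (fun v => W i v - W (i+1) v) ≤
          ((∏ l ∈ Finset.range k, opNorm (M' (n+l))) *
            ∏ l ∈ Finset.range i, opNorm (M (m+l))) *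
          (ε (m+i) * (Lconst v0 A (m+i+1) * ψ 0 v0)) := by
        rw [key]
        calc euclEnorm (applyChain M' n k fun v =>
              applyChain M m i (ψ (m+i)) v - applyChain M m (i+1) (ψ (m+(i+1))) v)
            ≤ (∏ l ∈ Finset.range k, opNorm (M' (n+l))) *
                euclEnorm (fun v =>
                  applyChain M m i (ψ (m+i)) v - applyChain M m (i+1) (ψ (m+(i+1))) v) := step1
          _ ≤ (∏ l ∈ Finset.range k, opNorm (M' (n+l))) *
                ((∏ l ∈ Finset.range i, opNorm (M (m+l))) *
                  (ε (m+i) * (Lconst v0 A (m+i+1) * ψ 0 v0))) := by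
              rw [hneg]
              exact mul_le_mul_of_nonneg_left step2 prodnn
          _ = _ := by ring
      refine le_trans step3 ?_
      refine cancel_arith v0 hAnn hAne ε hε hεsmall (m+i) (by omega) _ _ hψ0 ?_ ?_
      · exact mul_nonneg prodnn (Finset.prod_nonneg fun l _ => opNorm_nonneg _)
      · calc (∏ l ∈ Finset.range k, opNorm (M' (n+l))) *
              ∏ l ∈ Finset.range i, opNorm (M (m+l))
            ≤ ∏ j ∈ Finset.range (n+k+i), hfun A B N j :=
              key_prod_aux one_le_hfun (fun j => opNorm_nonneg _) hM'h
                (fun j => opNorm_nonneg _) hMh n k i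
          _ ≤ CcC B N * Pprod A (n+k+i) := prod_hfun_le _
          _ = CcC B N * Pprod A (m+i) := by rw [hm]
    obtain ⟨x, hxlim, hxdist⟩ := geom_limit (fun i => toEuc (W i))
      (CcC B N * ψ 0 v0) m N hWincr
    have hxeq : x = toEuc (applyChain M' n k (χ m)) := tendsto_nhds_unique hxlim hWlim
    have h0 := hxdist 0 (by omega)
    have hW0 : W 0 = ψ n := by
      show applyChain M' n k (applyChain M m 0 (ψ (m+0))) = ψ n
      exact applyChain_step hψ n k
    rw [hW0, hxeq] at h0
    simpa [dist_comm] using h0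
  -- step 2: conclude the limit
  have heucl : Tendsto (fun k => toEuc (applyChain M' n k (χ (n+k)))) atTop
      (nhds (toEuc (ψ n))) := by
    rw [tendsto_iff_dist_tendsto_zero]
    have hgeo : Tendsto (fun k : ℕ => ((CcC B N * ψ 0 v0) * ((2:ℝ)⁻¹)^n) * ((2:ℝ)⁻¹)^k)
        atTop (nhds 0) := by
      have := tendsto_pow_atTop_nhds_zero_of_lt_one
        (by norm_num : (0:ℝ) ≤ 2⁻¹) (by norm_num : (2:ℝ)⁻¹ < 1)
      simpa using this.const_mul ((CcC B N * ψ 0 v0) * ((2:ℝ)⁻¹)^n)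
    refine squeeze_zero' (Filter.Eventually.of_forall fun k => dist_nonneg) ?_ hgeo
    filter_upwards [eventually_ge_atTop N] with k hk
    calc dist (toEuc (applyChain M' n k (χ (n+k)))) (toEuc (ψ n))
        ≤ (CcC B N * ψ 0 v0) * ((2:ℝ)⁻¹)^(n+k) := hdist k hk
      _ = ((CcC B N * ψ 0 v0) * ((2:ℝ)⁻¹)^n) * ((2:ℝ)⁻¹)^k := by
          rw [pow_add]; ring
  have := tendsto_pi_of_tendsto_euc heucl
  exact this

lemma dist_pi_le_dist_euc {X : Type} [Fintype X] (f g : X → ℝ) :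
    dist f g ≤ dist (toEuc f) (toEuc g) := by
  rw [← enorm_dist]
  refine (dist_pi_le_iff (enorm_nonneg _)).2 fun v => ?_
  rw [Real.dist_eq]
  exact abs_le_enorm (fun x => f x - g x) v

lemma cont_limit_map {S : Set (∀ n, L n → ℝ)} (v0 : L 0) (n : ℕ)
    (hS : ∀ ψ : ↥S, 0 ≤ (ψ : ∀ n, L n → ℝ) 0 v0)
    (G : ↥S → (L n → ℝ)) (Fk : ℕ → ↥S → (L n → ℝ))
    (hFcont : ∀ k, Continuous (Fk k))
    (C : ℝ) (hC : 0 ≤ C)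
    (hbound : ∀ (ψ : ↥S) (k : ℕ), N ≤ n+k+1 →
      dist (toEuc (Fk k ψ)) (toEuc (G ψ))
        ≤ (C * (ψ : ∀ n, L n → ℝ) 0 v0) * ((2:ℝ)⁻¹)^(n+k)) :
    Continuous G := by
  rw [continuous_iff_continuousAt]
  intro ψ0
  set Mb := (ψ0 : ∀ n, L n → ℝ) 0 v0 + 1 with hMb
  have hMb0 : 0 < Mb := by have := hS ψ0; linarith
  set U : Set ↥S := {ψ | (ψ : ∀ n, L n → ℝ) 0 v0 < Mb} with hU
  have hUopen : IsOpen U := by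
    have hcnt : Continuous fun ψ : ↥S => (ψ : ∀ n, L n → ℝ) 0 v0 :=
      (continuous_apply v0).comp ((continuous_apply 0).comp continuous_subtype_val)
    exact isOpen_lt hcnt continuous_const
  have hψ0U : ψ0 ∈ U := by simp only [hU, Set.mem_setOf_eq, hMb]; linarith
  have hunif : TendstoUniformlyOn Fk G atTop U := by
    rw [Metric.tendstoUniformlyOn_iff]
    intro δ hδ
    have hgeo : Tendsto (fun k : ℕ => ((C * Mb) * ((2:ℝ)⁻¹)^n) * ((2:ℝ)⁻¹)^k)
        atTop (nhds 0) := by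
      have := tendsto_pow_atTop_nhds_zero_of_lt_one
        (by norm_num : (0:ℝ) ≤ 2⁻¹) (by norm_num : (2:ℝ)⁻¹ < 1)
      simpa using this.const_mul ((C * Mb) * ((2:ℝ)⁻¹)^n)
    filter_upwards [eventually_ge_atTop N, hgeo.eventually (gt_mem_nhds hδ)]
      with k hk1 hk2
    intro ψ hψU
    have h1 := hbound ψ k (by omega)
    have h2 : dist (G ψ) (Fk k ψ) ≤ (C * (ψ : ∀ n, L n → ℝ) 0 v0) * ((2:ℝ)⁻¹)^(n+k) := by
      calc dist (G ψ) (Fk k ψ) ≤ dist (toEuc (G ψ)) (toEuc (Fk k ψ)) :=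
            dist_pi_le_dist_euc _ _
        _ = dist (toEuc (Fk k ψ)) (toEuc (G ψ)) := dist_comm _ _
        _ ≤ _ := h1
    have h3 : (C * (ψ : ∀ n, L n → ℝ) 0 v0) * ((2:ℝ)⁻¹)^(n+k)
        ≤ ((C * Mb) * ((2:ℝ)⁻¹)^n) * ((2:ℝ)⁻¹)^k := by
      have hle : (ψ : ∀ n, L n → ℝ) 0 v0 ≤ Mb := le_of_lt hψU
      rw [pow_add, ← mul_assoc]
      refine mul_le_mul_of_nonneg_right ?_ (by positivity)
      refine mul_le_mul_of_nonneg_right ?_ (by positivity)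
      exact mul_le_mul_of_nonneg_left hle hC
    calc dist (G ψ) (Fk k ψ) ≤ _ := h2
      _ ≤ _ := h3
      _ < δ := hk2
  have hcont := hunif.continuousOn (Filter.Eventually.of_forall fun k => (hFcont k).continuousOn).frequently
  exact hcont.continuousAt (hUopen.mem_nhds hψ0U)

end Master


open Filter in
/-- Lemma 5.2: under the stated assumptions, the map
`(Tψ)^{j-1} = lim_k B^(j) ⋯ B^(j+k) ψ^{j+k}` is an affine homeomorphism
`lim_j A^(j) → lim_j B^(j)`. -/
theorem stmt_14 {L : ℕ → Type} [∀ n, Fintype (L n)] [∀ n, Nonempty (L n)]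
    (v0 : L 0) (hsing : ∀ v : L 0, v = v0)
    (A B : ∀ n, L n → L (n+1) → ℝ)
    (hA : IsProjSystem v0 A) (hB : IsProjSystem v0 B)
    (ε : ℕ → ℝ) (hε : ∀ k, 0 < ε k ∧ ε k < 1)
    (N : ℕ)
    (hεsmall : ∀ n : ℕ, N ≤ n + 1 →
      ε n ≤ ((2 : ℝ) ^ (n + 1))⁻¹ *
        (Lconst v0 A (n + 1) * ∏ j ∈ Finset.range n, (opNorm (A j) + 1))⁻¹)
    (hBA : ∀ j : ℕ, ∀ w : L j, pathMat A j v0 w ≤ pathMat B j v0 w)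
    (hclose : ∀ n : ℕ, N ≤ n + 1 →
      opNorm (fun v w => A n v w - B n v w) ≤ ε n) :
    ∃ e : ↥(InvLimit A) ≃ₜ ↥(InvLimit B),
      (∀ ψ : ↥(InvLimit A), ∀ n : ℕ,
        Filter.Tendsto
          (fun k => applyChain B n (k + 1) ((ψ : ∀ n, L n → ℝ) (n + (k + 1))))
          Filter.atTop (nhds ((e ψ : ∀ n, L n → ℝ) n))) ∧
      (∀ ψ φ : ↥(InvLimit A), ∀ t : ℝ, 0 ≤ t → t ≤ 1 →
        ∀ h : t • (ψ : ∀ n, L n → ℝ) + (1 - t) • (φ : ∀ n, L n → ℝ) ∈ InvLimit A,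
          ((e ⟨_, h⟩ : ∀ n, L n → ℝ)) =
            t • (e ψ : ∀ n, L n → ℝ) + (1 - t) • (e φ : ∀ n, L n → ℝ)) := by
  classical
  obtain ⟨hAnn, hAne⟩ := hA
  obtain ⟨hBnn, hBne⟩ := hB
  have hMhA : ∀ j, opNorm (A j) ≤ hfun A B N j := fun j => opA_le_hfun j
  have hMhB : ∀ j, opNorm (B j) ≤ hfun A B N j := fun j => opB_le_hfun ε hε hclose j
  have hδBA : ∀ j, N ≤ j+1 → opNorm (fun v w => B j v w - A j v w) ≤ ε j := fun j hj => by
    rw [opNorm_sub_comm]; exact hclose j hj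
  have hpathAA : ∀ k (w : L k), pathMat A k v0 w ≤ pathMat A k v0 w := fun k w => le_refl _
  set Tm : (∀ n, L n → ℝ) → (∀ n, L n → ℝ) :=
    fun φ n => limUnder Filter.atTop (fun k => applyChain B n k (φ (n+k))) with hTmdef
  set Sm : (∀ n, L n → ℝ) → (∀ n, L n → ℝ) :=
    fun φ n => limUnder Filter.atTop (fun k => applyChain A n k (φ (n+k))) with hSmdef
  have hTyb : ∀ {ψ}, ψ ∈ InvLimit A → ∀ n,
      Tendsto (fun k => applyChain B n k (ψ (n+k))) atTop (nhds (Tm ψ n)) ∧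
      (∀ k, N ≤ n+k+1 → dist (toEuc (applyChain B n k (ψ (n+k)))) (toEuc (Tm ψ n))
        ≤ (CcC B N * ψ 0 v0) * ((2:ℝ)⁻¹)^(n+k)) := by
    intro ψ hψ n
    obtain ⟨x, hx, hb⟩ := master v0 hAnn hAne ε hε hεsmall hAnn hpathAA hMhB hclose hψ n
    have h1 : Tendsto (fun k => applyChain B n k (ψ (n+k))) atTop
        (nhds ((WithLp.equiv 2 (L n → ℝ)) x)) := tendsto_pi_of_tendsto_euc hx
    have h2 : Tm ψ n = (WithLp.equiv 2 (L n → ℝ)) x := by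
      rw [hTmdef]; exact h1.limUnder_eq
    refine ⟨by rw [h2]; exact h1, fun k hk => ?_⟩
    rw [h2]
    exact hb k hk
  have hSyb : ∀ {φ}, φ ∈ InvLimit B → ∀ n,
      Tendsto (fun k => applyChain A n k (φ (n+k))) atTop (nhds (Sm φ n)) ∧
      (∀ k, N ≤ n+k+1 → dist (toEuc (applyChain A n k (φ (n+k)))) (toEuc (Sm φ n))
        ≤ (CcC B N * φ 0 v0) * ((2:ℝ)⁻¹)^(n+k)) := by
    intro φ hφ n
    obtain ⟨x, hx, hb⟩ := master v0 hAnn hAne ε hε hεsmall hBnn hBA hMhA hδBA hφ n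
    have h1 : Tendsto (fun k => applyChain A n k (φ (n+k))) atTop
        (nhds ((WithLp.equiv 2 (L n → ℝ)) x)) := tendsto_pi_of_tendsto_euc hx
    have h2 : Sm φ n = (WithLp.equiv 2 (L n → ℝ)) x := by
      rw [hSmdef]; exact h1.limUnder_eq
    refine ⟨by rw [h2]; exact h1, fun k hk => ?_⟩
    rw [h2]
    exact hb k hk
  have hTmem : ∀ {ψ}, ψ ∈ InvLimit A → Tm ψ ∈ InvLimit B := by
    intro ψ hψ
    constructor
    · intro n v
      have hco := tendsto_pi_nhds.1 ((hTyb hψ n).1) v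
      exact ge_of_tendsto' hco fun k => applyChain_nonneg hBnn n k _ (fun w => hψ.1 (n+k) w) v
    · intro n v
      have hco := tendsto_pi_nhds.1 ((hTyb hψ n).1) v
      have h1 : Tendsto (fun k => applyChain B n (k+1) (ψ (n+(k+1))) v) atTop
          (nhds (Tm ψ n v)) := (tendsto_add_atTop_iff_nat 1).2 hco
      have h2 : ∀ k, applyChain B n (k+1) (ψ (n+(k+1))) v
          = ∑ w, B n v w * applyChain B (n+1) k (ψ (n+1+k)) w :=
        fun k => congrFun (applyChain_left k n ψ) v
      have h3 : Tendsto (fun k => ∑ w, B n v w * applyChain B (n+1) k (ψ (n+1+k)) w) atTop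
          (nhds (∑ w, B n v w * Tm ψ (n+1) w)) := by
        refine tendsto_finset_sum _ fun w _ => ?_
        exact (tendsto_pi_nhds.1 ((hTyb hψ (n+1)).1) w).const_mul (B n v w)
      have h4 : Tendsto (fun k => applyChain B n (k+1) (ψ (n+(k+1))) v) atTop
          (nhds (∑ w, B n v w * Tm ψ (n+1) w)) := by
        simp_rw [h2]; exact h3
      exact tendsto_nhds_unique h1 h4
  have hSmem : ∀ {φ}, φ ∈ InvLimit B → Sm φ ∈ InvLimit A := by
    intro φ hφ
    constructor
    · intro n v
      have hco := tendsto_pi_nhds.1 ((hSyb hφ n).1) v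
      exact ge_of_tendsto' hco fun k => applyChain_nonneg hAnn n k _ (fun w => hφ.1 (n+k) w) v
    · intro n v
      have hco := tendsto_pi_nhds.1 ((hSyb hφ n).1) v
      have h1 : Tendsto (fun k => applyChain A n (k+1) (φ (n+(k+1))) v) atTop
          (nhds (Sm φ n v)) := (tendsto_add_atTop_iff_nat 1).2 hco
      have h2 : ∀ k, applyChain A n (k+1) (φ (n+(k+1))) v
          = ∑ w, A n v w * applyChain A (n+1) k (φ (n+1+k)) w :=
        fun k => congrFun (applyChain_left k n φ) v
      have h3 : Tendsto (fun k => ∑ w, A n v w * applyChain A (n+1) k (φ (n+1+k)) w) atTop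
          (nhds (∑ w, A n v w * Sm φ (n+1) w)) := by
        refine tendsto_finset_sum _ fun w _ => ?_
        exact (tendsto_pi_nhds.1 ((hSyb hφ (n+1)).1) w).const_mul (A n v w)
      have h4 : Tendsto (fun k => applyChain A n (k+1) (φ (n+(k+1))) v) atTop
          (nhds (∑ w, A n v w * Sm φ (n+1) w)) := by
        simp_rw [h2]; exact h3
      exact tendsto_nhds_unique h1 h4
  have hST : ∀ {ψ}, ψ ∈ InvLimit A → Sm (Tm ψ) = ψ := by
    intro ψ hψ
    funext n
    have hS := (hSyb (hTmem hψ) n).1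
    refine tendsto_nhds_unique hS ?_
    exact roundtrip v0 hAnn hAne ε hε hεsmall hAnn hpathAA hMhB hMhA hclose hψ
      (fun n' => (hTyb hψ n').1) n
  have hTS : ∀ {φ}, φ ∈ InvLimit B → Tm (Sm φ) = φ := by
    intro φ hφ
    funext n
    have hT := (hTyb (hSmem hφ) n).1
    refine tendsto_nhds_unique hT ?_
    exact roundtrip v0 hAnn hAne ε hε hεsmall hBnn hBA hMhA hMhB hδBA hφ
      (fun n' => (hSyb hφ n').1) n
  have hCc0 : (0:ℝ) ≤ CcC B N := le_trans zero_le_one one_le_CcC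
  have hcontT : Continuous (fun ψ : ↥(InvLimit A) =>
      (⟨Tm ψ.1, hTmem ψ.2⟩ : ↥(InvLimit B))) := by
    refine Continuous.subtype_mk ?_ _
    refine continuous_pi fun n => ?_
    refine cont_limit_map (N := N) v0 n (fun ψ => ψ.2.1 0 v0) _
      (fun k ψ => applyChain B n k (ψ.1 (n+k))) ?_ (CcC B N) hCc0 ?_
    · intro k
      exact (applyChain_continuous n k).comp
        ((continuous_apply (n+k)).comp continuous_subtype_val)
    · intro ψ k hk
      exact (hTyb ψ.2 n).2 k hk
  have hcontS : Continuous (fun φ : ↥(InvLimit B) =>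
      (⟨Sm φ.1, hSmem φ.2⟩ : ↥(InvLimit A))) := by
    refine Continuous.subtype_mk ?_ _
    refine continuous_pi fun n => ?_
    refine cont_limit_map (N := N) v0 n (fun φ => φ.2.1 0 v0) _
      (fun k φ => applyChain A n k (φ.1 (n+k))) ?_ (CcC B N) hCc0 ?_
    · intro k
      exact (applyChain_continuous n k).comp
        ((continuous_apply (n+k)).comp continuous_subtype_val)
    · intro φ k hk
      exact (hSyb φ.2 n).2 k hk
  refine ⟨⟨⟨fun ψ => ⟨Tm ψ.1, hTmem ψ.2⟩, fun φ => ⟨Sm φ.1, hSmem φ.2⟩,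
      fun ψ => Subtype.ext (hST ψ.2), fun φ => Subtype.ext (hTS φ.2)⟩,
      hcontT, hcontS⟩, ?_, ?_⟩
  · intro ψ n
    exact (tendsto_add_atTop_iff_nat 1).2 ((hTyb ψ.2 n).1)
  · intro ψ φ t ht0 ht1 h
    funext n
    have hψl := (hTyb ψ.2 n).1
    have hφl := (hTyb φ.2 n).1
    have hcombo := (hTyb h n).1
    have hchain : ∀ k, applyChain B n k ((t • (ψ : ∀ n, L n → ℝ)
        + (1-t) • (φ : ∀ n, L n → ℝ)) (n+k))
        = fun v => t * applyChain B n k ((ψ : ∀ n, L n → ℝ) (n+k)) v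
            + (1-t) * applyChain B n k ((φ : ∀ n, L n → ℝ) (n+k)) v := by
      intro k
      exact applyChain_combo n t (1-t) k _ _
    have hsum : Tendsto (fun k => fun v =>
        t * applyChain B n k ((ψ : ∀ n, L n → ℝ) (n+k)) v
          + (1-t) * applyChain B n k ((φ : ∀ n, L n → ℝ) (n+k)) v) atTop
        (nhds (fun v => t * Tm ψ.1 n v + (1-t) * Tm φ.1 n v)) := by
      rw [tendsto_pi_nhds]
      intro v
      exact ((tendsto_pi_nhds.1 hψl v).const_mul t).add
        ((tendsto_pi_nhds.1 hφl v).const_mul (1-t))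
    have hres : Tm (t • (ψ : ∀ n, L n → ℝ) + (1-t) • (φ : ∀ n, L n → ℝ)) n
        = fun v => t * Tm ψ.1 n v + (1-t) * Tm φ.1 n v := by
      refine tendsto_nhds_unique hcombo ?_
      have : (fun k => applyChain B n k ((t • (ψ : ∀ n, L n → ℝ)
          + (1-t) • (φ : ∀ n, L n → ℝ)) (n+k))) = fun k => fun v =>
        t * applyChain B n k ((ψ : ∀ n, L n → ℝ) (n+k)) v
          + (1-t) * applyChain B n k ((φ : ∀ n, L n → ℝ) (n+k)) v := funext hchain
      rw [this]
      exact hsum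
    exact hres
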